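/- Let $(M,d)$ be a compact metric space, $(\Omega,\mathcal{F},\mathbb{P},\theta)$ a probability preserving system, and $\varphi$ an i.i.d. random iteration of maps on $M$ that are uniformly $\lambda$-Lipschitz with $\lambda \in (0,1)$. Then there exists a set $\Omega_* \subseteq \Omega$ with $\mathbb{P}(\Omega_*) = 1$ such that for every $\omega \in \Omega_*$ and every $x \in M$, the empirical measures $\frac{1}{T}\sum_{t=0}^{T-1}\delta_{\varphi(t,\omega,x)}$ converge weak-star to the unique stationary measure $\pi_*\mathbb{P}$, where $\pi$ is the coding map. In particular the full-measure set of good noise realizations can be chosen uniformly over all initial conditions $x$. -/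

import Mathlib

open MeasureTheory Filter ProbabilityTheory

/-- Backward random orbit: `backOrb f ω n p = f (ω 0) ∘ f (ω 1) ∘ ⋯ ∘ f (ω (n-1)) (p)`. -/
def backOrb {I M : Type*} (f : I → M → M) (ω : ℕ → I) : ℕ → M → M
  | 0 => id
  | n + 1 => fun p => backOrb f ω n (f (ω n) p)

/-- Forward random orbit: `fwdOrb f ω t x = f (ω (t-1)) ∘ ⋯ ∘ f (ω 0) (x)`. -/
def fwdOrb {I M : Type*} (f : I → M → M) (ω : ℕ → I) : ℕ → M → M
  | 0 => id
  | t + 1 => fun x => f (ω t) (fwdOrb f ω t x)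

/-! ### Auxiliary deterministic lemmas about orbits -/

section det
variable {I M : Type*} [MetricSpace M] (f : I → M → M) {lam : ℝ}

lemma backOrb_dist (hLip : ∀ i a b, dist (f i a) (f i b) ≤ lam * dist a b)
    (hlam0 : 0 ≤ lam) (ω : ℕ → I) (n : ℕ) (a b : M) :
    dist (backOrb f ω n a) (backOrb f ω n b) ≤ lam ^ n * dist a b := by
  induction n generalizing a b with
  | zero => simp [backOrb]
  | succ n ih =>
      show dist (backOrb f ω n (f (ω n) a)) (backOrb f ω n (f (ω n) b)) ≤ _
      calc dist (backOrb f ω n (f (ω n) a)) (backOrb f ω n (f (ω n) b))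
          ≤ lam ^ n * dist (f (ω n) a) (f (ω n) b) := ih _ _
        _ ≤ lam ^ n * (lam * dist a b) :=
            mul_le_mul_of_nonneg_left (hLip _ _ _) (pow_nonneg hlam0 n)
        _ = lam ^ (n + 1) * dist a b := by ring

omit [MetricSpace M] in
lemma backOrb_congr {ω ω' : ℕ → I} {n : ℕ} (h : ∀ m < n, ω m = ω' m) (p : M) :
    backOrb f ω n p = backOrb f ω' n p := by
  induction n generalizing p with
  | zero => rfl
  | succ n ih =>
      show backOrb f ω n (f (ω n) p) = backOrb f ω' n (f (ω' n) p)
      rw [h n (Nat.lt_succ_self n)]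
      exact ih (fun m hm => h m (hm.trans (Nat.lt_succ_self n))) _

omit [MetricSpace M] in
lemma backOrb_add (ω : ℕ → I) (n m : ℕ) (p : M) :
    backOrb f ω (n + m) p = backOrb f ω n (backOrb f (fun i => ω (n + i)) m p) := by
  induction m generalizing p with
  | zero => rfl
  | succ m ih =>
      show backOrb f ω (n + m) (f (ω (n + m)) p) = _
      rw [ih]
      rfl

omit [MetricSpace M] in
lemma fwdOrb_add (ω : ℕ → I) (a b : ℕ) (x : M) :
    fwdOrb f ω (a + b) x = fwdOrb f (fun n => ω (a + n)) b (fwdOrb f ω a x) := by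
  induction b with
  | zero => rfl
  | succ b ih =>
      show f (ω (a + b)) (fwdOrb f ω (a + b) x) = f (ω (a + b)) _
      rw [ih]

omit [MetricSpace M] in
lemma fwdOrb_shift (ω : ℕ → I) (t : ℕ) (x : M) :
    fwdOrb f ω (t + 1) x = fwdOrb f (fun n => ω (n + 1)) t (f (ω 0) x) := by
  have := fwdOrb_add f ω 1 t x
  rw [add_comm 1 t] at this
  rw [this]
  congr 1
  ext n
  exact congrArg ω (add_comm 1 n)

omit [MetricSpace M] in
lemma fwdOrb_eq_backOrb (ω : ℕ → I) (t : ℕ) (x : M) :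
    fwdOrb f ω t x = backOrb f (fun n => ω (t - 1 - n)) t x := by
  induction t generalizing ω x with
  | zero => rfl
  | succ t ih =>
      rw [fwdOrb_shift, ih]
      show _ = backOrb f (fun n => ω (t + 1 - 1 - n)) t (f ((fun n => ω (t + 1 - 1 - n)) t) x)
      have ht : (fun n => ω (t + 1 - 1 - n)) t = ω 0 := by norm_num
      rw [ht]
      apply backOrb_congr
      intro m hm
      congr 1
      omega

variable {π : (ℕ → I) → M} {D : ℝ}

lemma dist_pi_backOrb (hLip : ∀ i a b, dist (f i a) (f i b) ≤ lam * dist a b)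
    (hlam0 : 0 ≤ lam)
    (hπ : ∀ (ω : ℕ → I) (p : M), Filter.Tendsto (fun n => backOrb f ω n p) atTop (nhds (π ω)))
    (hbd : ∀ a b : M, dist a b ≤ D) (ω : ℕ → I) (n : ℕ) (q : M) :
    dist (π ω) (backOrb f ω n q) ≤ lam ^ n * D := by
  have h1 : Tendsto (fun m => dist (backOrb f ω m q) (backOrb f ω n q)) atTop
      (nhds (dist (π ω) (backOrb f ω n q))) := (hπ ω q).dist tendsto_const_nhds
  refine le_of_tendsto h1 ?_
  filter_upwards [eventually_ge_atTop n] with m hm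
  obtain ⟨c, rfl⟩ := Nat.exists_eq_add_of_le hm
  rw [backOrb_add]
  calc dist (backOrb f ω n (backOrb f (fun i => ω (n + i)) c q)) (backOrb f ω n q)
      ≤ lam ^ n * dist (backOrb f (fun i => ω (n + i)) c q) q :=
        backOrb_dist f hLip hlam0 ω n _ _
    _ ≤ lam ^ n * D := mul_le_mul_of_nonneg_left (hbd _ _) (pow_nonneg hlam0 n)

lemma dist_pi_pi (hLip : ∀ i a b, dist (f i a) (f i b) ≤ lam * dist a b)
    (hlam0 : 0 ≤ lam)
    (hπ : ∀ (ω : ℕ → I) (p : M), Filter.Tendsto (fun n => backOrb f ω n p) atTop (nhds (π ω)))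
    (hbd : ∀ a b : M, dist a b ≤ D) {ω ω' : ℕ → I} {n : ℕ}
    (h : ∀ m < n, ω m = ω' m) (q : M) :
    dist (π ω) (π ω') ≤ 2 * (lam ^ n * D) := by
  calc dist (π ω) (π ω')
      ≤ dist (π ω) (backOrb f ω n q) + dist (backOrb f ω n q) (π ω') := dist_triangle _ _ _
    _ ≤ lam ^ n * D + lam ^ n * D := by
        refine add_le_add (dist_pi_backOrb f hLip hlam0 hπ hbd ω n q) ?_
        rw [backOrb_congr f h, dist_comm]
        exact dist_pi_backOrb f hLip hlam0 hπ hbd ω' n q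
    _ = 2 * (lam ^ n * D) := by ring

end det

/-! ### Cesàro machinery -/

section cesaro
open Finset

lemma tendsto_of_approx (a : ℕ → ℝ) (L : ℝ)
    (h : ∀ ε : ℝ, 0 < ε → ∃ b : ℕ → ℝ, ∃ c : ℝ, Tendsto b atTop (nhds c) ∧
      (∀ᶠ T in atTop, |a T - b T| ≤ ε) ∧ |c - L| ≤ ε) :
    Tendsto a atTop (nhds L) := by
  rw [Metric.tendsto_atTop]
  intro ε hε
  obtain ⟨b, c, hb, hab, hcL⟩ := h (ε / 4) (by linarith)
  have h2 : ∀ᶠ T in atTop, dist (b T) c < ε / 4 :=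
    hb (Metric.ball_mem_nhds c (by linarith))
  have h3 : ∀ᶠ T in atTop, dist (a T) L < ε := by
    filter_upwards [hab, h2] with T h1 h2
    rw [Real.dist_eq] at h2 ⊢
    have : |a T - L| ≤ |a T - b T| + |b T - c| + |c - L| := by
      calc |a T - L| = |(a T - b T) + (b T - c) + (c - L)| := by ring_nf
        _ ≤ _ := by
            refine (abs_add_le _ _).trans (add_le_add (abs_add_le _ _) le_rfl)
    linarith
  obtain ⟨N, hN⟩ := eventually_atTop.1 h3
  exact ⟨N, hN⟩

lemma sum_range_mul_decomp (b : ℕ → ℝ) (k q : ℕ) :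
    ∑ t ∈ range (k * q), b t = ∑ r ∈ range k, ∑ j ∈ range q, b (k * j + r) := by
  induction q with
  | zero => simp
  | succ q ih =>
      have h1 : k * (q + 1) = k * q + k := by ring
      rw [h1, Finset.sum_range_add, ih]
      simp only [Finset.sum_range_succ, Finset.sum_add_distrib]

lemma nat_div_cast_tendsto (k : ℕ) (hk : 0 < k) :
    Tendsto (fun T : ℕ => ((T / k : ℕ) : ℝ) / (T : ℝ)) atTop (nhds (1 / k)) := by
  rw [tendsto_iff_dist_tendsto_zero]
  apply squeeze_zero' (Eventually.of_forall fun T => dist_nonneg)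
    (g := fun T : ℕ => (k : ℝ) / T)
  · filter_upwards [eventually_ge_atTop 1] with T hT
    have hT0 : (0:ℝ) < T := by exact_mod_cast hT
    have hk0 : (0:ℝ) < k := by exact_mod_cast hk
    have hk1 : (1:ℝ) ≤ k := by exact_mod_cast hk
    have h1 : ((k : ℝ) * ((T / k : ℕ) : ℝ)) ≤ T := by exact_mod_cast Nat.mul_div_le T k
    have h2 : (T : ℝ) < k * ((T / k : ℕ) : ℝ) + k := by
      have hmod : k * (T / k) + T % k = T := Nat.div_add_mod T k
      have hlt : T % k < k := Nat.mod_lt T hk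
      have : T < k * (T / k) + k := by omega
      exact_mod_cast this
    have hqT : ((T / k : ℕ) : ℝ) / T ≤ 1 / k := by
      rw [div_le_div_iff₀ hT0 hk0]
      nlinarith
    have hub : (1:ℝ)/k ≤ ((k:ℝ) + ((T / k : ℕ) : ℝ))/T := by
      rw [div_le_div_iff₀ hk0 hT0]
      nlinarith
    have hadd : ((k:ℝ) + ((T / k : ℕ) : ℝ))/T = (k:ℝ)/T + ((T / k : ℕ) : ℝ)/T :=
      add_div _ _ _
    rw [Real.dist_eq, abs_of_nonpos (by linarith)]
    linarith
  · exact tendsto_const_div_atTop_nhds_zero_nat (k : ℝ)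

lemma cesaro_of_residues (b : ℕ → ℝ) (C : ℝ) (hC : ∀ t, |b t| ≤ C) (k : ℕ) (hk : 0 < k)
    (μ : ℝ)
    (h : ∀ r < k, Tendsto (fun J : ℕ => (∑ j ∈ range J, b (k * j + r)) / (J : ℝ))
      atTop (nhds μ)) :
    Tendsto (fun T : ℕ => (∑ t ∈ range T, b t) / (T : ℝ)) atTop (nhds μ) := by
  have hC0 : 0 ≤ C := (abs_nonneg _).trans (hC 0)
  have hdiv : Tendsto (fun T : ℕ => T / k) atTop atTop := by
    apply tendsto_atTop_atTop.2
    intro bnd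
    exact ⟨k * bnd, fun n hn => (Nat.le_div_iff_mul_le hk).2 (by rw [mul_comm]; exact hn)⟩
  have part1 : Tendsto (fun T : ℕ => ∑ r ∈ range k,
      (((T / k : ℕ) : ℝ) / (T : ℝ)) * ((∑ j ∈ range (T / k), b (k * j + r)) / ((T / k : ℕ) : ℝ)))
      atTop (nhds (∑ _r ∈ range k, (1 / (k : ℝ)) * μ)) := by
    apply tendsto_finset_sum
    intro r hr
    exact (nat_div_cast_tendsto k hk).mul ((h r (Finset.mem_range.1 hr)).comp hdiv)
  have hsumμ : (∑ _r ∈ range k, (1 / (k : ℝ)) * μ) = μ := by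
    rw [Finset.sum_const, Finset.card_range, nsmul_eq_mul]
    field_simp
  rw [hsumμ] at part1
  have part2 : Tendsto (fun T : ℕ => (∑ t ∈ Finset.Ico (k * (T / k)) T, b t) / (T : ℝ))
      atTop (nhds 0) := by
    apply squeeze_zero_norm' (a := fun T : ℕ => ((k : ℝ) * C) / T)
    · filter_upwards [eventually_ge_atTop 1] with T hT
      have hT0 : (0:ℝ) < T := by exact_mod_cast hT
      rw [Real.norm_eq_abs, abs_div, abs_of_pos hT0, div_le_div_iff_of_pos_right hT0]
      calc |∑ t ∈ Finset.Ico (k * (T / k)) T, b t| ≤ ∑ t ∈ Finset.Ico (k * (T / k)) T, |b t| :=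
            Finset.abs_sum_le_sum_abs _ _
        _ ≤ ∑ _t ∈ Finset.Ico (k * (T / k)) T, C := Finset.sum_le_sum fun t _ => hC t
        _ = ((T - k * (T / k) : ℕ) : ℝ) * C := by
            rw [Finset.sum_const, Nat.card_Ico, nsmul_eq_mul]
        _ ≤ (k : ℝ) * C := by
            have h1 : T - k * (T / k) ≤ k := by
              have hmod : k * (T / k) + T % k = T := Nat.div_add_mod T k
              have hlt : T % k < k := Nat.mod_lt T hk
              omega
            have : ((T - k * (T / k) : ℕ) : ℝ) ≤ (k : ℝ) := by exact_mod_cast h1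
            exact mul_le_mul_of_nonneg_right this hC0
    · exact tendsto_const_div_atTop_nhds_zero_nat _
  have comb := part1.add part2
  rw [add_zero] at comb
  apply comb.congr'
  filter_upwards [eventually_ge_atTop 1] with T hT
  have hT0 : (0:ℝ) < T := by exact_mod_cast hT
  have hsplit : ∑ t ∈ range T, b t
      = ∑ t ∈ range (k * (T / k)), b t + ∑ t ∈ Finset.Ico (k * (T / k)) T, b t := by
    conv_lhs => rw [Finset.range_eq_Ico]
    rw [Finset.range_eq_Ico]
    exact (Finset.sum_Ico_consecutive _ (Nat.zero_le _) (Nat.mul_div_le T k)).symm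
  rw [hsplit, add_div, sum_range_mul_decomp]
  conv_rhs => rw [Finset.sum_div]
  congr 1
  apply Finset.sum_congr rfl
  intro r _
  rcases Nat.eq_zero_or_pos (T / k) with hq | hq
  · simp [hq]
  · have hq0 : ((T / k : ℕ) : ℝ) ≠ 0 := by
      have : (0:ℝ) < ((T / k : ℕ) : ℝ) := by exact_mod_cast hq
      exact ne_of_gt this
    field_simp

lemma cesaro_shift (a : ℕ → ℝ) (k : ℕ) (μ : ℝ)
    (h : Tendsto (fun T : ℕ => (∑ t ∈ range T, a (t + k)) / (T : ℝ)) atTop (nhds μ)) :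
    Tendsto (fun T : ℕ => (∑ t ∈ range T, a t) / (T : ℝ)) atTop (nhds μ) := by
  have term1 : Tendsto (fun T : ℕ => (∑ t ∈ range k, a t) / (T : ℝ)) atTop (nhds 0) := by
    apply squeeze_zero_norm' (a := fun T : ℕ => |∑ t ∈ range k, a t| / T)
    · filter_upwards [eventually_ge_atTop 1] with T hT
      rw [Real.norm_eq_abs, abs_div, abs_of_nonneg (by positivity : (0:ℝ) ≤ (T:ℝ))]
    · exact tendsto_const_div_atTop_nhds_zero_nat _
  have hsub : Tendsto (fun T : ℕ => T - k) atTop atTop := tendsto_sub_atTop_nat k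
  have term2a : Tendsto (fun T : ℕ => (∑ t ∈ range (T - k), a (t + k)) / ((T - k : ℕ) : ℝ))
      atTop (nhds μ) := h.comp hsub
  have factor : Tendsto (fun T : ℕ => ((T - k : ℕ) : ℝ) / (T : ℝ)) atTop (nhds 1) := by
    have h1 : Tendsto (fun T : ℕ => 1 - (k : ℝ) / T) atTop (nhds (1 - 0)) :=
      tendsto_const_nhds.sub (tendsto_const_div_atTop_nhds_zero_nat (k : ℝ))
    rw [sub_zero] at h1
    apply h1.congr'
    filter_upwards [eventually_ge_atTop (k + 1)] with T hT
    have hT0 : (0:ℝ) < T := by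
      have : 0 < T := by omega
      exact_mod_cast this
    rw [Nat.cast_sub (by omega)]
    field_simp
  have term2 : Tendsto (fun T : ℕ =>
      ((∑ t ∈ range (T - k), a (t + k)) / ((T - k : ℕ) : ℝ)) * (((T - k : ℕ) : ℝ) / (T : ℝ)))
      atTop (nhds μ) := by
    have := term2a.mul factor
    rwa [mul_one] at this
  have comb := term1.add term2
  rw [zero_add] at comb
  apply comb.congr'
  filter_upwards [eventually_ge_atTop (k + 1)] with T hT
  have hT0 : (0:ℝ) < T := by
    have : 0 < T := by omega
    exact_mod_cast this
  have hTk : (0:ℝ) < ((T - k : ℕ) : ℝ) := by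
    have : 0 < T - k := by omega
    exact_mod_cast this
  have hsplit : ∑ t ∈ range T, a t
      = ∑ t ∈ range k, a t + ∑ t ∈ range (T - k), a (t + k) := by
    conv_lhs => rw [Finset.range_eq_Ico]
    rw [← Finset.sum_Ico_consecutive _ (Nat.zero_le k) (by omega : k ≤ T)]
    congr 1
    · rw [Finset.range_eq_Ico]
    · rw [Finset.sum_Ico_eq_sum_range]
      apply Finset.sum_congr rfl
      intro t _
      congr 1
      omega
  rw [hsplit, add_div]
  congr 1
  field_simp

lemma cesaro_residues_offset (a : ℕ → ℝ) (C : ℝ) (hC : ∀ t, |a t| ≤ C) (k : ℕ) (hk : 0 < k)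
    (μ : ℝ)
    (h : ∀ r < k, Tendsto (fun J : ℕ => (∑ j ∈ range J, a (k * (j + 1) + r)) / (J : ℝ))
      atTop (nhds μ)) :
    Tendsto (fun T : ℕ => (∑ t ∈ range T, a t) / (T : ℝ)) atTop (nhds μ) := by
  apply cesaro_shift a k μ
  apply cesaro_of_residues (fun t => a (t + k)) C (fun t => hC _) k hk μ
  intro r hr
  apply (h r hr).congr
  intro J
  congr 1
  apply Finset.sum_congr rfl
  intro j _
  congr 1
  ring

end cesaro

/-! ### Probabilistic machinery -/

def ext0 {I : Type*} (i₀ : I) (k : ℕ) (v : Fin k → I) : ℕ → I :=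
  fun n => if h : n < k then v ⟨n, h⟩ else i₀

lemma ext0_measurable {I : Type*} [MeasurableSpace I] (i₀ : I) (k : ℕ) :
    Measurable (ext0 i₀ k) := by
  apply measurable_pi_lambda
  intro n
  by_cases h : n < k
  · simpa [ext0, h] using measurable_pi_apply (⟨n, h⟩ : Fin k)
  · simp [ext0, h]

noncomputable def Zf {I M : Type*} (π : (ℕ → I) → M) (g : M → ℝ) (i₀ : I) (k t : ℕ)
    (ω : ℕ → I) : ℝ :=
  g (π (ext0 i₀ k (fun s : Fin k => ω (t - 1 - (s : ℕ)))))

lemma blockLaw {I : Type*} [MeasurableSpace I] (P : Measure (ℕ → I)) [IsProbabilityMeasure P]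
    (ν : Measure I) [IsProbabilityMeasure ν]
    (hcoord : ∀ n : ℕ, Measure.map (fun ω : ℕ → I => ω n) P = ν)
    (hindep : iIndepFun (fun n (ω : ℕ → I) => ω n) P)
    (k : ℕ) (e : Fin k → ℕ) (he : Function.Injective e) :
    Measure.map (fun ω : ℕ → I => fun s : Fin k => ω (e s)) P
      = Measure.pi (fun _ : Fin k => ν) := by
  have hB : Measurable (fun ω : ℕ → I => fun s : Fin k => ω (e s)) :=
    measurable_pi_lambda _ fun s => measurable_pi_apply _
  refine (Measure.pi_eq ?_).symm
  intro A hA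
  classical
  set sets : ℕ → Set I := fun i =>
    if h : ∃ s : Fin k, e s = i then A h.choose else Set.univ with hsets
  have hsets_e : ∀ s : Fin k, sets (e s) = A s := by
    intro s
    have h : ∃ s' : Fin k, e s' = e s := ⟨s, rfl⟩
    have : h.choose = s := he h.choose_spec
    simp only [hsets, dif_pos h]
    rw [this]
  have hsets_meas : ∀ i, i ∈ Finset.image e Finset.univ → MeasurableSet (sets i) := by
    intro i hi
    by_cases h : ∃ s : Fin k, e s = i
    · simp only [hsets, dif_pos h]; exact hA _
    · simp only [hsets, dif_neg h]; exact MeasurableSet.univ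
  have hpre : (fun ω : ℕ → I => fun s : Fin k => ω (e s)) ⁻¹' Set.univ.pi A
      = ⋂ i ∈ Finset.image e Finset.univ, (fun ω : ℕ → I => ω i) ⁻¹' sets i := by
    ext ω
    simp only [Set.mem_preimage, Set.mem_pi, Set.mem_univ, forall_true_left,
      Set.mem_iInter, Finset.mem_image, Finset.mem_univ, true_and]
    constructor
    · rintro h i ⟨s, rfl⟩
      rw [hsets_e s]
      exact h s
    · intro h s
      have := h (e s) ⟨s, rfl⟩
      rwa [hsets_e s] at this
  rw [Measure.map_apply hB (MeasurableSet.univ_pi hA), hpre,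
    hindep.measure_inter_preimage_eq_mul _ hsets_meas,
    Finset.prod_image (fun s _ t _ hst => he hst)]
  apply Finset.prod_congr rfl
  intro s _
  rw [hsets_e s, ← hcoord (e s), Measure.map_apply (measurable_pi_apply _) (hA s)]

lemma slln_block {M : Type*} [MeasurableSpace M] {I : Type*} [MeasurableSpace I]
    (P : Measure (ℕ → I)) [IsProbabilityMeasure P]
    (ν : Measure I) [IsProbabilityMeasure ν]
    (hcoord : ∀ n : ℕ, Measure.map (fun ω : ℕ → I => ω n) P = ν)
    (hindep : iIndepFun (fun n (ω : ℕ → I) => ω n) P)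
    (π : (ℕ → I) → M) (hπmeas : Measurable π)
    (g : M → ℝ) (hg : Measurable g) (Cg : ℝ) (hCg : ∀ z, |g z| ≤ Cg)
    (i₀ : I) (k : ℕ) (r : ℕ) :
    ∀ᵐ ω ∂P, Filter.Tendsto
      (fun J : ℕ => (∑ j ∈ Finset.range J, Zf π g i₀ k (k * (j + 1) + r) ω) / (J : ℝ))
      atTop (nhds (∫ v, g (π (ext0 i₀ k v)) ∂(Measure.pi fun _ : Fin k => ν))) := by
  classical
  set Ξ : (Fin k → I) → ℝ := fun v => g (π (ext0 i₀ k v)) with hΞdef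
  have hΞ : Measurable Ξ := hg.comp (hπmeas.comp (ext0_measurable i₀ k))
  set X : ℕ → (ℕ → I) → ℝ := fun j ω => Zf π g i₀ k (k * (j + 1) + r) ω with hXdef
  set B : ℕ → (ℕ → I) → (Fin k → I) :=
    fun j ω => fun s : Fin k => ω (k * (j + 1) + r - 1 - (s : ℕ)) with hBdef
  have hBmeas : ∀ j, Measurable (B j) :=
    fun j => measurable_pi_lambda _ fun s => measurable_pi_apply _
  have hXB : ∀ j, X j = Ξ ∘ B j := fun j => rfl
  have hinj : ∀ j : ℕ, Function.Injective (fun s : Fin k => k * (j + 1) + r - 1 - (s : ℕ)) := by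
    intro j s₁ s₂ h
    have h1 : (s₁ : ℕ) < k := s₁.isLt
    have h2 : (s₂ : ℕ) < k := s₂.isLt
    have hkj : k * (j + 1) = k * j + k := by ring
    have h' : k * (j + 1) + r - 1 - (s₁ : ℕ) = k * (j + 1) + r - 1 - (s₂ : ℕ) := h
    have : (s₁ : ℕ) = (s₂ : ℕ) := by omega
    exact Fin.ext this
  have hlaw : ∀ j, Measure.map (B j) P = Measure.pi (fun _ : Fin k => ν) :=
    fun j => blockLaw P ν hcoord hindep k _ (hinj j)
  have hXmeas : ∀ j, Measurable (X j) := fun j => hΞ.comp (hBmeas j)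
  have hident : ∀ j, IdentDistrib (X j) (X 0) P P := by
    intro j
    refine ⟨(hXmeas j).aemeasurable, (hXmeas 0).aemeasurable, ?_⟩
    rw [hXB j, hXB 0, ← Measure.map_map hΞ (hBmeas j), ← Measure.map_map hΞ (hBmeas 0),
      hlaw j, hlaw 0]
  have hint : Integrable (X 0) P :=
    Integrable.mono' (integrable_const Cg) (hXmeas 0).aestronglyMeasurable
      (Eventually.of_forall fun ω => by
        have := hCg (π (ext0 i₀ k (B 0 ω))); rw [Real.norm_eq_abs]; exact this)
  have hpair : Pairwise (Function.onFun (IndepFun · · P) X) := by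
    intro i j hij
    set Si := Finset.Ico (k * i + r) (k * i + r + k) with hSi
    set Sj := Finset.Ico (k * j + r) (k * j + r + k) with hSj
    have hmem : ∀ (m : ℕ) (s : Fin k),
        k * (m + 1) + r - 1 - (s : ℕ) ∈ Finset.Ico (k * m + r) (k * m + r + k) := by
      intro m s
      have h1 : (s : ℕ) < k := s.isLt
      have hkm : k * (m + 1) = k * m + k := by ring
      rw [Finset.mem_Ico]
      omega
    set ψ : ∀ m : ℕ, ((Finset.Ico (k * m + r) (k * m + r + k) : Finset ℕ) → I) → ℝ :=
      fun m v => Ξ (fun s : Fin k => v ⟨k * (m + 1) + r - 1 - (s : ℕ), hmem m s⟩) with hψdef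
    have hψmeas : ∀ m, Measurable (ψ m) :=
      fun m => hΞ.comp (measurable_pi_lambda _ fun s => measurable_pi_apply _)
    have hdisj : Disjoint Si Sj := by
      rw [Finset.disjoint_left]
      intro n hni hnj
      rw [hSi, Finset.mem_Ico] at hni
      rw [hSj, Finset.mem_Ico] at hnj
      rcases hij.lt_or_gt with h | h
      · have : k * (i + 1) ≤ k * j := Nat.mul_le_mul_left k h
        have hki : k * (i + 1) = k * i + k := by ring
        omega
      · have : k * (j + 1) ≤ k * i := Nat.mul_le_mul_left k h
        have hkj : k * (j + 1) = k * j + k := by ring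
        omega
    have hbase := hindep.indepFun_finset Si Sj hdisj (fun n => measurable_pi_apply n)
    have hcomp := hbase.comp (hψmeas i) (hψmeas j)
    have heq1 : (ψ i ∘ fun (a : ℕ → I) (n : Si) => a n) = X i := by
      funext ω; rfl
    have heq2 : (ψ j ∘ fun (a : ℕ → I) (n : Sj) => a n) = X j := by
      funext ω; rfl
    rwa [heq1, heq2] at hcomp
  have hSLLN := strong_law_ae_real X hint hpair hident
  have hval : (∫ ω, X 0 ω ∂P) = ∫ v, Ξ v ∂(Measure.pi fun _ : Fin k => ν) := by
    rw [← hlaw 0, integral_map (hBmeas 0).aemeasurable hΞ.aestronglyMeasurable]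
    rfl
  filter_upwards [hSLLN] with ω hω
  rw [← hval]
  exact hω

lemma integrable_of_abs_le {Ω : Type*} [MeasurableSpace Ω] (μ : Measure Ω) [IsFiniteMeasure μ]
    (h : Ω → ℝ) (hm : AEStronglyMeasurable h μ) (C : ℝ) (hC : ∀ x, |h x| ≤ C) :
    Integrable h μ :=
  Integrable.mono' (integrable_const C) hm
    (Eventually.of_forall fun x => by simpa [Real.norm_eq_abs] using hC x)

/-- **Uniform typicality of random orbits of i.i.d. uniform contractions.** Let the
noise `ω = (ω_t)` be i.i.d. with common law `ν`, and let each map `f i` be a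
`λ`-contraction of a compact metric space `M`. Let `π` be the coding map, i.e. the
(point-independent) limit of the backward compositions. Then there is a single set
`Ω_*` of noise realizations of full probability such that for *every* `ω ∈ Ω_*` and
*every* initial condition `x ∈ M`, the empirical measures of the forward random orbit
converge weak-star to the unique stationary measure `π_*ℙ`. -/
theorem uniform_typicality_random_contractions
    {M : Type*} [MetricSpace M] [CompactSpace M] [MeasurableSpace M] [BorelSpace M]
    {I : Type*} [MeasurableSpace I]
    (P : Measure (ℕ → I)) [IsProbabilityMeasure P]
    (ν : Measure I) [IsProbabilityMeasure ν]
    (hcoord : ∀ n : ℕ, Measure.map (fun ω : ℕ → I => ω n) P = ν)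
    (hindep : iIndepFun (fun n (ω : ℕ → I) => ω n) P)
    (f : I → M → M) (lam : ℝ) (hlam : lam ∈ Set.Ioo (0:ℝ) 1)
    (hLip : ∀ i : I, ∀ a b : M, dist (f i a) (f i b) ≤ lam * dist a b)
    (hmeas : ∀ i, Measurable (f i))
    (π : (ℕ → I) → M) (hπmeas : Measurable π)
    (hπ : ∀ (ω : ℕ → I) (p : M),
      Tendsto (fun n => backOrb f ω n p) atTop (nhds (π ω))) :
    ∃ Ωs : Set (ℕ → I), MeasurableSet Ωs ∧ P Ωs = 1 ∧
      ∀ ω ∈ Ωs, ∀ x : M, ∀ g : C(M, ℝ),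
        Tendsto (fun T => (∑ t ∈ Finset.range T, g (fwdOrb f ω t x)) / (T : ℝ))
          atTop (nhds (∫ z, g z ∂(Measure.map π P))) := by
  obtain ⟨hlam0, hlam1⟩ := hlam
  rcases isEmpty_or_nonempty M with hM | hM
  · exact ⟨Set.univ, MeasurableSet.univ, measure_univ, fun ω _ x => (IsEmpty.false x).elim⟩
  have hneI : Nonempty (ℕ → I) := by
    by_contra h
    rw [not_nonempty_iff] at h
    have h1 : P Set.univ = 1 := measure_univ
    rw [Set.univ_eq_empty_iff.2 h, measure_empty] at h1
    exact zero_ne_one h1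
  obtain ⟨ω₀⟩ := hneI
  set i₀ : I := ω₀ 0 with hi₀
  set D : ℝ := Metric.diam (Set.univ : Set M) with hDdef
  have hbd : ∀ a b : M, dist a b ≤ D := fun a b =>
    Metric.dist_le_diam_of_mem isCompact_univ.isBounded trivial trivial
  have hD0 : 0 ≤ D := Metric.diam_nonneg
  obtain ⟨Dset, hDc, hDd⟩ := TopologicalSpace.exists_countable_dense C(M, ℝ)
  set A : Set (ℕ → I) := {ω | ∀ g ∈ Dset, ∀ k : ℕ, ∀ r : ℕ,
    Tendsto (fun J : ℕ => (∑ j ∈ Finset.range J, Zf π (⇑g) i₀ k (k * (j + 1) + r) ω) / (J : ℝ))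
      atTop (nhds (∫ v, g (π (ext0 i₀ k v)) ∂(Measure.pi fun _ : Fin k => ν)))} with hAdef
  have hAae : ∀ᵐ ω ∂P, ω ∈ A := by
    simp only [hAdef, Set.mem_setOf_eq]
    rw [ae_ball_iff hDc]
    intro g hg
    rw [ae_all_iff]
    intro k
    rw [ae_all_iff]
    intro r
    exact slln_block P ν hcoord hindep π hπmeas (⇑g) g.continuous.measurable ‖g‖
      (fun z => by simpa [Real.norm_eq_abs] using g.norm_coe_le_norm z) i₀ k r
  refine ⟨(toMeasurable P Aᶜ)ᶜ, (measurableSet_toMeasurable P Aᶜ).compl, ?_, ?_⟩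
  · have h0 : P Aᶜ = 0 := by
      have := ae_iff.1 hAae
      simpa [Set.compl_def] using this
    rw [measure_compl (measurableSet_toMeasurable _ _) (measure_ne_top _ _),
      measure_toMeasurable, h0, measure_univ]
    simp
  · intro ω hω x g
    have hωA : ω ∈ A := by
      by_contra hA'
      exact hω (subset_toMeasurable P Aᶜ hA')
    rw [hAdef, Set.mem_setOf_eq] at hωA
    have hLrw : (∫ z, g z ∂(Measure.map π P)) = ∫ ω', g (π ω') ∂P :=
      integral_map hπmeas.aemeasurable g.continuous.measurable.aestronglyMeasurable
    rw [hLrw]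
    apply tendsto_of_approx
    intro ε hε
    obtain ⟨g', hg'D, hg'close⟩ := hDd.exists_dist_lt g (show (0:ℝ) < ε/8 by linarith)
    have hgg' : ∀ z : M, |g z - g' z| ≤ ε / 8 := by
      intro z
      have h1 : dist (g z) (g' z) ≤ dist g g' := ContinuousMap.dist_apply_le_dist z
      rw [Real.dist_eq] at h1
      linarith
    obtain ⟨δ, hδ0, hδ⟩ := Metric.uniformContinuous_iff.1
      (CompactSpace.uniformContinuous_of_continuous g'.continuous) (ε/8) (by linarith)
    have hpow : Tendsto (fun n : ℕ => 2 * (lam ^ n * D)) atTop (nhds 0) := by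
      have h1 : Tendsto (fun n : ℕ => lam ^ n) atTop (nhds 0) :=
        tendsto_pow_atTop_nhds_zero_of_lt_one hlam0.le hlam1
      have := (h1.mul_const D).const_mul 2
      simpa using this
    obtain ⟨k₀, hk₀⟩ := eventually_atTop.1 (hpow.eventually (eventually_lt_nhds hδ0))
    set k := max k₀ 1 with hkdef
    have hk1 : 0 < k := lt_of_lt_of_le Nat.one_pos (le_max_right _ _)
    have hkδ : 2 * (lam ^ k * D) < δ := hk₀ k (le_max_left _ _)
    set Zt : ℕ → ℝ := fun t => Zf π (⇑g') i₀ k t ω with hZdef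
    set c : ℝ := ∫ v, g' (π (ext0 i₀ k v)) ∂(Measure.pi fun _ : Fin k => ν) with hcdef
    have hZbd : ∀ t, |Zt t| ≤ ‖g'‖ := fun t => by
      have := g'.norm_coe_le_norm (π (ext0 i₀ k (fun s : Fin k => ω (t - 1 - (s : ℕ)))))
      rw [Real.norm_eq_abs] at this; exact this
    refine ⟨fun T => (∑ t ∈ Finset.range T, Zt t) / (T : ℝ), c, ?_, ?_, ?_⟩
    · exact cesaro_residues_offset Zt ‖g'‖ hZbd k hk1 c (fun r _ => hωA g' hg'D k r)
    · -- eventual closeness of the two empirical averages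
      have hptwise : ∀ t, k ≤ t → |g (fwdOrb f ω t x) - Zt t| ≤ ε / 4 := by
        intro t hkt
        set w : ℕ → I := ext0 i₀ k (fun s : Fin k => ω (t - 1 - (s : ℕ))) with hwdef
        have hw : ∀ m < k, w m = ω (t - 1 - m) := by
          intro m hm
          simp [hwdef, ext0, hm]
        have horb : backOrb f w k (fwdOrb f ω (t - k) x) = fwdOrb f ω t x := by
          have h1 : fwdOrb f ω t x
              = fwdOrb f (fun n => ω (t - k + n)) k (fwdOrb f ω (t - k) x) := by
            have h2 := fwdOrb_add f ω (t - k) k x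
            rw [Nat.sub_add_cancel hkt] at h2
            exact h2
          have h3 := fwdOrb_eq_backOrb f (fun n => ω (t - k + n)) k (fwdOrb f ω (t - k) x)
          rw [h1, h3]
          apply backOrb_congr
          intro m hm
          rw [hw m hm]
          congr 1
          omega
        have hdist : dist (π w) (fwdOrb f ω t x) ≤ lam ^ k * D := by
          rw [← horb]
          exact dist_pi_backOrb f hLip hlam0.le hπ hbd w k _
        have hlt : dist (fwdOrb f ω t x) (π w) < δ := by
          rw [dist_comm]
          have hnn : 0 ≤ lam ^ k * D := mul_nonneg (pow_nonneg hlam0.le k) hD0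
          linarith
        have h1 : |g (fwdOrb f ω t x) - g' (fwdOrb f ω t x)| ≤ ε / 8 := hgg' _
        have h2 : |g' (fwdOrb f ω t x) - g' (π w)| ≤ ε / 8 := by
          have h3 := hδ hlt
          rw [Real.dist_eq] at h3
          linarith
        have hZeq : Zt t = g' (π w) := rfl
        rw [hZeq]
        calc |g (fwdOrb f ω t x) - g' (π w)|
            ≤ |g (fwdOrb f ω t x) - g' (fwdOrb f ω t x)|
              + |g' (fwdOrb f ω t x) - g' (π w)| := by
              have heq : g (fwdOrb f ω t x) - g' (π w)
                  = (g (fwdOrb f ω t x) - g' (fwdOrb f ω t x))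
                    + (g' (fwdOrb f ω t x) - g' (π w)) := by ring
              rw [heq]
              exact abs_add_le _ _
          _ ≤ ε / 8 + ε / 8 := add_le_add h1 h2
          _ ≤ ε / 4 := by linarith
      set Cb : ℝ := ‖g‖ + ‖g'‖ with hCbdef
      have hCb0 : 0 ≤ Cb := by positivity
      have hsmall : ∀ᶠ T : ℕ in atTop, ((k : ℝ) * Cb) / T ≤ ε / 2 :=
        (tendsto_const_div_atTop_nhds_zero_nat ((k:ℝ) * Cb)).eventually
          (eventually_le_nhds (by linarith))
      filter_upwards [eventually_ge_atTop (k + 1), hsmall] with T hT hsm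
      have hT0 : (0:ℝ) < T := by
        have : 0 < T := by omega
        exact_mod_cast this
      have hterm : ∀ t, |g (fwdOrb f ω t x) - Zt t| ≤ Cb := by
        intro t
        have h1 : |g (fwdOrb f ω t x)| ≤ ‖g‖ := by
          simpa [Real.norm_eq_abs] using g.norm_coe_le_norm (fwdOrb f ω t x)
        have h2 := hZbd t
        calc |g (fwdOrb f ω t x) - Zt t| ≤ |g (fwdOrb f ω t x)| + |Zt t| := by
              rw [sub_eq_add_neg]
              exact (abs_add_le _ _).trans (by rw [abs_neg])
          _ ≤ Cb := add_le_add h1 h2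
      have hsum : |∑ t ∈ Finset.range T, (g (fwdOrb f ω t x) - Zt t)|
          ≤ (k:ℝ) * Cb + (T:ℝ) * (ε/4) := by
        calc |∑ t ∈ Finset.range T, (g (fwdOrb f ω t x) - Zt t)|
            ≤ ∑ t ∈ Finset.range T, |g (fwdOrb f ω t x) - Zt t| :=
              Finset.abs_sum_le_sum_abs _ _
          _ = ∑ t ∈ Finset.Ico 0 k, |g (fwdOrb f ω t x) - Zt t|
              + ∑ t ∈ Finset.Ico k T, |g (fwdOrb f ω t x) - Zt t| := by
              conv_lhs => rw [Finset.range_eq_Ico]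
              exact (Finset.sum_Ico_consecutive _ (Nat.zero_le k) (by omega)).symm
          _ ≤ (k:ℝ) * Cb + (T:ℝ) * (ε/4) := by
              refine add_le_add ?_ ?_
              · calc ∑ t ∈ Finset.Ico 0 k, |g (fwdOrb f ω t x) - Zt t|
                    ≤ ∑ _t ∈ Finset.Ico 0 k, Cb := Finset.sum_le_sum fun t _ => hterm t
                  _ = (k:ℝ) * Cb := by
                      rw [Finset.sum_const, Nat.card_Ico, Nat.sub_zero, nsmul_eq_mul]
              · calc ∑ t ∈ Finset.Ico k T, |g (fwdOrb f ω t x) - Zt t|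
                    ≤ ∑ _t ∈ Finset.Ico k T, (ε/4) :=
                      Finset.sum_le_sum fun t ht => hptwise t (Finset.mem_Ico.1 ht).1
                  _ = ((T - k : ℕ):ℝ) * (ε/4) := by
                      rw [Finset.sum_const, Nat.card_Ico, nsmul_eq_mul]
                  _ ≤ (T:ℝ) * (ε/4) := by
                      have hle : ((T - k : ℕ):ℝ) ≤ (T:ℝ) := by
                        exact_mod_cast Nat.sub_le T k
                      exact mul_le_mul_of_nonneg_right hle (by linarith)
      have hdiff : |(∑ t ∈ Finset.range T, g (fwdOrb f ω t x)) / (T:ℝ)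
          - (∑ t ∈ Finset.range T, Zt t) / (T:ℝ)| ≤ ((k:ℝ) * Cb) / T + ε / 4 := by
        rw [div_sub_div_same, ← Finset.sum_sub_distrib, abs_div, abs_of_pos hT0]
        calc |∑ t ∈ Finset.range T, (g (fwdOrb f ω t x) - Zt t)| / (T:ℝ)
            ≤ ((k:ℝ) * Cb + (T:ℝ) * (ε/4)) / (T:ℝ) := by
              gcongr
          _ = ((k:ℝ) * Cb) / T + ε / 4 := by
              field_simp
      linarith [hdiff, hsm]
    · -- closeness of the limits
      have hBid : Measurable (fun ω' : ℕ → I => fun s : Fin k => ω' (s : ℕ)) :=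
        measurable_pi_lambda _ fun s => measurable_pi_apply _
      have hlawid : Measure.map (fun ω' : ℕ → I => fun s : Fin k => ω' (s : ℕ)) P
          = Measure.pi (fun _ : Fin k => ν) :=
        blockLaw P ν hcoord hindep k (fun s => (s : ℕ)) (fun s t hst => Fin.ext hst)
      have hΞ' : Measurable (fun v : Fin k → I => g' (π (ext0 i₀ k v))) :=
        g'.continuous.measurable.comp (hπmeas.comp (ext0_measurable i₀ k))
      have hceq : c = ∫ ω', g' (π (ext0 i₀ k (fun s : Fin k => ω' (s : ℕ)))) ∂P := by
        rw [hcdef, ← hlawid, integral_map hBid.aemeasurable hΞ'.aestronglyMeasurable]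
      have hpt : ∀ ω' : ℕ → I,
          |g' (π (ext0 i₀ k (fun s : Fin k => ω' (s : ℕ)))) - g (π ω')| ≤ ε / 4 := by
        intro ω'
        have hagree : ∀ m < k, (ext0 i₀ k (fun s : Fin k => ω' (s : ℕ))) m = ω' m := by
          intro m hm
          simp [ext0, hm]
        have hdd : dist (π (ext0 i₀ k (fun s : Fin k => ω' (s:ℕ)))) (π ω')
            ≤ 2 * (lam ^ k * D) :=
          dist_pi_pi f hLip hlam0.le hπ hbd hagree (π ω')
        have hlt : dist (π (ext0 i₀ k (fun s : Fin k => ω' (s:ℕ)))) (π ω') < δ :=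
          lt_of_le_of_lt hdd hkδ
        have h1 : |g' (π (ext0 i₀ k (fun s : Fin k => ω' (s:ℕ)))) - g' (π ω')| ≤ ε/8 := by
          have h3 := hδ hlt
          rw [Real.dist_eq] at h3
          linarith
        have h2 : |g' (π ω') - g (π ω')| ≤ ε/8 := by
          have := hgg' (π ω')
          rw [abs_sub_comm] at this
          linarith
        calc |g' (π (ext0 i₀ k (fun s : Fin k => ω' (s:ℕ)))) - g (π ω')|
            ≤ |g' (π (ext0 i₀ k (fun s : Fin k => ω' (s:ℕ)))) - g' (π ω')|
              + |g' (π ω') - g (π ω')| := by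
              have heq : g' (π (ext0 i₀ k (fun s : Fin k => ω' (s:ℕ)))) - g (π ω')
                  = (g' (π (ext0 i₀ k (fun s : Fin k => ω' (s:ℕ)))) - g' (π ω'))
                    + (g' (π ω') - g (π ω')) := by ring
              rw [heq]
              exact abs_add_le _ _
          _ ≤ ε/8 + ε/8 := add_le_add h1 h2
          _ ≤ ε/4 := by linarith
      have hint1 : Integrable (fun ω' => g' (π (ext0 i₀ k (fun s : Fin k => ω' (s:ℕ))))) P :=
        integrable_of_abs_le P _ (hΞ'.comp hBid).aestronglyMeasurable ‖g'‖
          (fun ω' => by simpa [Real.norm_eq_abs] using g'.norm_coe_le_norm _)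
      have hint2 : Integrable (fun ω' => g (π ω')) P :=
        integrable_of_abs_le P _ (g.continuous.measurable.comp hπmeas).aestronglyMeasurable ‖g‖
          (fun ω' => by simpa [Real.norm_eq_abs] using g.norm_coe_le_norm _)
      have habs : |c - ∫ ω', g (π ω') ∂P|
          = |∫ ω', (g' (π (ext0 i₀ k (fun s : Fin k => ω' (s:ℕ)))) - g (π ω')) ∂P| := by
        rw [hceq, ← integral_sub hint1 hint2]
      rw [habs]
      have hnorm := norm_integral_le_of_norm_le_const (μ := P) (C := ε/4)
        (f := fun ω' => g' (π (ext0 i₀ k (fun s : Fin k => ω' (s:ℕ)))) - g (π ω'))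
        (Eventually.of_forall fun ω' => by simpa [Real.norm_eq_abs] using hpt ω')
      rw [probReal_univ, mul_one, Real.norm_eq_abs] at hnorm
      linarith
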